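/- arXiv:1404.6766 — 3 statements merged into one kernel-verified Lean document; each statement's English description precedes it below -/
import Mathlib

section
/- Let s and r be two nodes, each with node-selection probabilities, values γ, endpoints L and payoffs u defined as in the context. If u_{s,j} > u_{r,j} for some state j ∈ {1,…,n}, then there exists a state i ∈ {1,…,n} such that u_{s,i} > u_{r,i} and α_{s,i} < α_{r,i}. -/
/-- Probability of at least `m` successes in `l-1` Bernoulli(x) trials. -/
noncomputable def w (l m : ℕ) (x : ℝ) : ℝ :=
  ∑ i ∈ Finset.Icc m (l - 1), ((l - 1).choose i : ℝ) * x ^ i * (1 - x) ^ (l - 1 - i)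

/-- `W x = 1 - w x`. -/
noncomputable def W (l m : ℕ) (x : ℝ) : ℝ := 1 - w l m x

/-- `γ_{a,i} = ∑_{j=i}^n α_{a,j}` for a node with selection probabilities `α`. -/
noncomputable def gamN (n : ℕ) (α : ℕ → ℝ) (i : ℕ) : ℝ :=
  ∑ j ∈ Finset.Icc i n, α j

/-- The maximum expected payoff `u_{a,i} = (f_i(L_{a,i-1}) - c) · W(γ_{a,i})` at state `i`
for a node with selection probabilities `α` and lower endpoints `L`. -/
noncomputable def payoff (l m n : ℕ) (c : ℝ) (f : ℕ → ℝ → ℝ)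
    (α : ℕ → ℝ) (L : ℕ → ℝ) (i : ℕ) : ℝ :=
  (f i (L (i - 1)) - c) * W l m (gamN n α i)

lemma sum_telescope_Icc (g : ℕ → ℝ) (a b : ℕ) (ha : 1 ≤ a) (hab : a ≤ b) :
    ∑ i ∈ Finset.Icc a b, (g (i - 1) - g i) = g (a - 1) - g b := by
  induction b, hab using Nat.le_induction with
  | base => simp
  | succ b hab ih =>
      rw [Finset.sum_Icc_succ_top (by omega), ih]
      have : b + 1 - 1 = b := by omega
      rw [this]; ring

lemma w_hasDerivAt (l m : ℕ) (hm : 1 ≤ m) (hml : m ≤ l - 1) (x : ℝ) :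
    HasDerivAt (w l m)
      ((l - 1 : ℕ) * ((l - 2).choose (m - 1) : ℝ) * x ^ (m - 1) * (1 - x) ^ (l - 1 - m)) x := by
  set N := l - 1 with hN
  have hN1 : 1 ≤ N := le_trans hm hml
  have hterm : ∀ i ∈ Finset.Icc m N, HasDerivAt
      (fun y : ℝ => ((N.choose i : ℝ)) * y ^ i * (1 - y) ^ (N - i))
      ((N.choose i : ℝ) * ((i : ℝ) * x ^ (i - 1) * (1 - x) ^ (N - i)
        + x ^ i * (-((N - i : ℕ) * (1 - x) ^ (N - i - 1))))) x := by
    intro i _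
    have h1 : HasDerivAt (fun y : ℝ => y ^ i) ((i : ℝ) * x ^ (i - 1)) x := hasDerivAt_pow i x
    have h2 : HasDerivAt (fun y : ℝ => (1 - y) ^ (N - i))
        (-(((N - i : ℕ) : ℝ) * (1 - x) ^ (N - i - 1))) x := by
      have hin : HasDerivAt (fun y : ℝ => 1 - y) (-1 : ℝ) x := by
        simpa using (hasDerivAt_id' x).const_sub (1:ℝ)
      have := (hasDerivAt_pow (N - i) (1 - x)).comp x hin
      simpa [Function.comp_def, mul_comm, mul_left_comm, mul_assoc] using this
    have := (h1.mul h2).const_mul ((N.choose i : ℝ))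
    convert this using 2
    · rfl
    · rfl
    simp only [Pi.mul_apply]
    ring
  have hsum := HasDerivAt.fun_sum hterm
  have hfun : (fun y : ℝ => ∑ i ∈ Finset.Icc m N,
      ((N.choose i : ℝ)) * y ^ i * (1 - y) ^ (N - i)) = w l m := rfl
  rw [hfun] at hsum
  convert hsum using 1
  · rfl
  · rfl
  -- now the algebraic identity
  have key : ∀ i ∈ Finset.Icc m N,
      (N.choose i : ℝ) * ((i : ℝ) * x ^ (i - 1) * (1 - x) ^ (N - i)
        + x ^ i * (-((N - i : ℕ) * (1 - x) ^ (N - i - 1))))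
      = (N : ℝ) * ((((N-1).choose (i-1) : ℝ) * x ^ (i-1) * (1-x) ^ (N-1-(i-1)))
          - (((N-1).choose i : ℝ) * x ^ i * (1-x) ^ (N-1-i))) := by
    intro i hi
    rw [Finset.mem_Icc] at hi
    have hi1 : 1 ≤ i := le_trans hm hi.1
    have hiN : i ≤ N := hi.2
    have c1 : (N.choose i) * i = N * (N-1).choose (i-1) := by
      have := Nat.add_one_mul_choose_eq (N-1) (i-1)
      have h1 : N - 1 + 1 = N := by omega
      have h2 : i - 1 + 1 = i := by omega
      rw [h1, h2] at this
      exact this.symm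
    have c2 : (N.choose i) * (N - i) = N * (N-1).choose i := by
      have h3 := Nat.choose_succ_right_eq N i
      have := Nat.add_one_mul_choose_eq (N-1) i
      have h1 : N - 1 + 1 = N := by omega
      rw [h1] at this
      rw [← h3]
      exact this.symm
    have e1 : N - 1 - (i - 1) = N - i := by omega
    have e2 : N - 1 - i = N - i - 1 := by omega
    rw [e1, e2]
    have c1' : (N.choose i : ℝ) * i = (N : ℝ) * ((N-1).choose (i-1) : ℝ) := by
      exact_mod_cast congrArg (Nat.cast : ℕ → ℝ) c1
    have c2' : (N.choose i : ℝ) * ((N - i : ℕ) : ℝ) = (N : ℝ) * ((N-1).choose i : ℝ) := by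
      exact_mod_cast congrArg (Nat.cast : ℕ → ℝ) c2
    linear_combination (x ^ (i-1) * (1-x) ^ (N-i)) * c1' - (x ^ i * (1-x) ^ (N-i-1)) * c2'
  rw [Finset.sum_congr rfl key, ← Finset.mul_sum,
    sum_telescope_Icc (fun k => (((N-1).choose k : ℝ) * x ^ k * (1-x) ^ (N-1-k))) m N hm hml]
  have hz : (N-1).choose N = 0 := Nat.choose_eq_zero_of_lt (by omega)
  have e4 : N - 1 = l - 2 := by omega
  have e5 : l - 2 - (m - 1) = N - m := by omega
  rw [hz, e4, e5]
  push_cast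
  ring

lemma pos_fac {a b : ℝ} (h : 0 < a * b) (hb : 0 < b) : 0 < a := by
  by_contra hcon
  push_neg at hcon
  nlinarith

lemma w_monotoneOn (l m : ℕ) (hm : 1 ≤ m) (hml : m ≤ l - 1) :
    MonotoneOn (w l m) (Set.Icc 0 1) := by
  have hdiff : Differentiable ℝ (w l m) :=
    fun x => (w_hasDerivAt l m hm hml x).differentiableAt
  apply monotoneOn_of_deriv_nonneg (convex_Icc 0 1) hdiff.continuous.continuousOn
    (fun x _ => (hdiff x).differentiableWithinAt)
  intro x hx
  rw [interior_Icc] at hx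
  rw [(w_hasDerivAt l m hm hml x).deriv]
  have h1 : (0:ℝ) ≤ x := le_of_lt hx.1
  have h2 : (0:ℝ) ≤ 1 - x := by linarith [hx.2]
  have p1 := pow_nonneg h1 (m - 1)
  have p2 := pow_nonneg h2 (l - 1 - m)
  positivity

lemma w_lt_one (l m : ℕ) (hm : 1 ≤ m) (hml : m ≤ l - 1) {x : ℝ}
    (h0 : 0 ≤ x) (h1 : x < 1) : w l m x < 1 := by
  have hx1 : (0:ℝ) < 1 - x := by linarith
  have hxx : x + (1 - x) = 1 := by ring
  have h2 : (∑ i ∈ Finset.range (l - 1 + 1),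
      (((l-1).choose i : ℝ)) * x ^ i * (1 - x) ^ (l - 1 - i)) = 1 := by
    calc ∑ i ∈ Finset.range (l - 1 + 1), (((l-1).choose i : ℝ)) * x ^ i * (1 - x) ^ (l - 1 - i)
        = ∑ i ∈ Finset.range (l - 1 + 1), x ^ i * (1 - x) ^ (l - 1 - i) * (((l-1).choose i : ℝ)) :=
          Finset.sum_congr rfl (fun i _ => by ring)
      _ = (x + (1 - x)) ^ (l - 1) := (add_pow x (1 - x) (l - 1)).symm
      _ = 1 := by rw [hxx, one_pow]
  have hone : (∑ i ∈ Finset.Icc 0 (l - 1),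
      (((l-1).choose i : ℝ)) * x ^ i * (1 - x) ^ (l - 1 - i)) = 1 := by
    rw [← Finset.Ico_add_one_right_eq_Icc, ← Finset.range_eq_Ico]
    exact h2
  have hsplit : (∑ i ∈ Finset.Icc 0 (l - 1),
      (((l-1).choose i : ℝ)) * x ^ i * (1 - x) ^ (l - 1 - i))
      = (((l-1).choose 0 : ℝ)) * x ^ 0 * (1 - x) ^ (l - 1 - 0)
        + ∑ i ∈ Finset.Icc 1 (l - 1),
            (((l-1).choose i : ℝ)) * x ^ i * (1 - x) ^ (l - 1 - i) := by
    rw [Finset.Icc_eq_cons_Ioc (Nat.zero_le (l - 1)), Finset.sum_cons, ← Finset.Icc_add_one_left_eq_Ioc, zero_add]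
  have hle : w l m x ≤ ∑ i ∈ Finset.Icc 1 (l - 1),
      (((l-1).choose i : ℝ)) * x ^ i * (1 - x) ^ (l - 1 - i) := by
    apply Finset.sum_le_sum_of_subset_of_nonneg (Finset.Icc_subset_Icc hm le_rfl)
    intro i _ _
    have p1 := pow_nonneg h0 i
    have p2 := pow_nonneg (le_of_lt hx1) (l - 1 - i)
    positivity
  have hpow : 0 < (1 - x) ^ (l - 1) := pow_pos hx1 _
  simp only [Nat.choose_zero_right, Nat.cast_one, one_mul, pow_zero, Nat.sub_zero] at hsplit
  linarith

lemma W_pos (l m : ℕ) (hm : 1 ≤ m) (hml : m ≤ l - 1) {x : ℝ}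
    (h0 : 0 ≤ x) (h1 : x < 1) : 0 < W l m x := by
  have := w_lt_one l m hm hml h0 h1
  rw [W]; linarith

lemma W_anti (l m : ℕ) (hm : 1 ≤ m) (hml : m ≤ l - 1) {x y : ℝ}
    (h0 : 0 ≤ x) (hxy : x ≤ y) (h1 : y < 1) : W l m y ≤ W l m x := by
  have := w_monotoneOn l m hm hml (Set.mem_Icc.2 ⟨h0, by linarith⟩)
    (Set.mem_Icc.2 ⟨le_trans h0 hxy, le_of_lt h1⟩) hxy
  rw [W, W]; linarith

lemma gamN_nonneg (n : ℕ) (α : ℕ → ℝ) (hα0 : ∀ j ∈ Finset.Icc 1 n, 0 ≤ α j)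
    {i : ℕ} (hi : 1 ≤ i) : 0 ≤ gamN n α i :=
  Finset.sum_nonneg fun j hj => hα0 j (Finset.mem_Icc.2
    ⟨le_trans hi (Finset.mem_Icc.1 hj).1, (Finset.mem_Icc.1 hj).2⟩)

lemma gamN_lt_one (n : ℕ) (α : ℕ → ℝ) (hα0 : ∀ j ∈ Finset.Icc 1 n, 0 ≤ α j)
    (hsum : ∑ j ∈ Finset.Icc 1 n, α j < 1) {i : ℕ} (hi : 1 ≤ i) : gamN n α i < 1 := by
  have : gamN n α i ≤ ∑ j ∈ Finset.Icc 1 n, α j :=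
    Finset.sum_le_sum_of_subset_of_nonneg (Finset.Icc_subset_Icc hi le_rfl)
      (fun j hj _ => hα0 j hj)
  linarith

lemma gamN_step (n : ℕ) (α : ℕ → ℝ) {i : ℕ} (hi : i ≤ n) :
    gamN n α i = α i + gamN n α (i + 1) := by
  rw [gamN, gamN, Finset.Icc_eq_cons_Ioc hi, Finset.sum_cons, Finset.Icc_add_one_left_eq_Ioc]

lemma gamN_top (n : ℕ) (α : ℕ → ℝ) : gamN n α (n + 1) = 0 := by
  rw [gamN, Finset.Icc_eq_empty (by omega), Finset.sum_empty]

lemma node_pos (l m n : ℕ) (hm : 1 ≤ m) (hml : m ≤ l - 1)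
    (c v : ℝ) (f : ℕ → ℝ → ℝ)
    (hford : ∀ i ∈ Finset.Icc 1 n, ∀ j ∈ Finset.Icc 1 n, i < j → ∀ x : ℝ, f i x < f j x)
    (hfv : c < f 1 v)
    (α : ℕ → ℝ) (hα0 : ∀ j ∈ Finset.Icc 1 n, 0 ≤ α j)
    (hαsum : ∑ j ∈ Finset.Icc 1 n, α j < 1)
    (L : ℕ → ℝ) (hL0 : L 0 = v)
    (hLrec : ∀ i ∈ Finset.Icc 1 n,
      (f i (L i) - c) * W l m (gamN n α (i + 1)) = (f i (L (i - 1)) - c) * W l m (gamN n α i)) :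
    ∀ i, 1 ≤ i → i ≤ n → c < f i (L (i - 1)) ∧ c < f i (L i) := by
  have hWpos : ∀ k, 1 ≤ k → 0 < W l m (gamN n α k) := fun k hk =>
    W_pos l m hm hml (gamN_nonneg n α hα0 hk) (gamN_lt_one n α hα0 hαsum hk)
  have step2 : ∀ i, 1 ≤ i → i ≤ n → c < f i (L (i - 1)) → c < f i (L i) := by
    intro i h1 h2 h3
    have hrec := hLrec i (Finset.mem_Icc.2 ⟨h1, h2⟩)
    have hu : 0 < (f i (L (i - 1)) - c) * W l m (gamN n α i) :=
      mul_pos (by linarith) (hWpos i h1)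
    rw [← hrec] at hu
    have := pos_fac hu (hWpos (i + 1) (by omega))
    linarith
  intro i h1
  induction i, h1 using Nat.le_induction with
  | base =>
      intro hn'
      have hA : c < f 1 (L (1 - 1)) := by
        have : L (1 - 1) = v := by rw [show (1:ℕ) - 1 = 0 from rfl, hL0]
        rw [this]; exact hfv
      exact ⟨hA, step2 1 le_rfl hn' hA⟩
  | succ i hi ih =>
      intro hin
      obtain ⟨hA, hB⟩ := ih (by omega)
      have hAB : c < f (i + 1) (L i) :=
        lt_trans hB (hford i (Finset.mem_Icc.2 ⟨hi, by omega⟩) (i + 1)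
          (Finset.mem_Icc.2 ⟨by omega, hin⟩) (by omega) (L i))
      have hAB' : c < f (i + 1) (L (i + 1 - 1)) := hAB
      exact ⟨hAB', step2 (i + 1) (by omega) hin hAB'⟩

theorem stmt15 (l m n : ℕ) (hm : 1 ≤ m) (hml : m ≤ l - 1) (hn : 1 ≤ n)
    (c v : ℝ) (f : ℕ → ℝ → ℝ)
    (hfc : ∀ j ∈ Finset.Icc 1 n, Continuous (f j))
    (hfm : ∀ j ∈ Finset.Icc 1 n, StrictMono (f j))
    (hfb : ∀ j ∈ Finset.Icc 1 n, Function.Bijective (f j))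
    (hford : ∀ i ∈ Finset.Icc 1 n, ∀ j ∈ Finset.Icc 1 n, i < j → ∀ x : ℝ, f i x < f j x)
    (hfv : c < f 1 v)
    (hassum : ∀ i ∈ Finset.Icc 1 n, ∀ j ∈ Finset.Icc 1 n, i < j →
      ∀ x y : ℝ, y < x → c < f i y →
        (f i y - c) / (f j y - c) < (f i x - c) / (f j x - c))
    (αs αr : ℕ → ℝ)
    (hαs0 : ∀ j ∈ Finset.Icc 1 n, 0 ≤ αs j) (hαssum : ∑ j ∈ Finset.Icc 1 n, αs j < 1)
    (hαr0 : ∀ j ∈ Finset.Icc 1 n, 0 ≤ αr j) (hαrsum : ∑ j ∈ Finset.Icc 1 n, αr j < 1)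
    (Ls Lr : ℕ → ℝ) (hLs0 : Ls 0 = v) (hLr0 : Lr 0 = v)
    (hLsrec : ∀ i ∈ Finset.Icc 1 n,
      (f i (Ls i) - c) * W l m (gamN n αs (i + 1)) =
        (f i (Ls (i - 1)) - c) * W l m (gamN n αs i))
    (hLrrec : ∀ i ∈ Finset.Icc 1 n,
      (f i (Lr i) - c) * W l m (gamN n αr (i + 1)) =
        (f i (Lr (i - 1)) - c) * W l m (gamN n αr i))
    (j : ℕ) (hj : j ∈ Finset.Icc 1 n)
    (hu : payoff l m n c f αr Lr j < payoff l m n c f αs Ls j) :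
    ∃ i ∈ Finset.Icc 1 n,
      payoff l m n c f αr Lr i < payoff l m n c f αs Ls i ∧ αs i < αr i := by
  by_contra hcon
  push_neg at hcon
  obtain ⟨hj1, hjn⟩ := Finset.mem_Icc.1 hj
  have hWs : ∀ k, 1 ≤ k → 0 < W l m (gamN n αs k) := fun k hk =>
    W_pos l m hm hml (gamN_nonneg n αs hαs0 hk) (gamN_lt_one n αs hαs0 hαssum hk)
  have hWr : ∀ k, 1 ≤ k → 0 < W l m (gamN n αr k) := fun k hk =>
    W_pos l m hm hml (gamN_nonneg n αr hαr0 hk) (gamN_lt_one n αr hαr0 hαrsum hk)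
  have hSpos := node_pos l m n hm hml c v f hford hfv αs hαs0 hαssum Ls hLs0 hLsrec
  have hRpos := node_pos l m n hm hml c v f hford hfv αr hαr0 hαrsum Lr hLr0 hLrrec
  rcases le_or_gt (gamN n αr j) (gamN n αs j) with hcase | hcase
  · -- Case A : γ_r j ≤ γ_s j, go downward to index 1
    have down : ∀ d i, 1 ≤ i → i + d = j →
        payoff l m n c f αr Lr i < payoff l m n c f αs Ls i ∧
          gamN n αr i ≤ gamN n αs i := by
      intro d
      induction d with
      | zero =>
          intro i h1 h2
          have : i = j := by omega
          subst this
          exact ⟨hu, hcase⟩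
      | succ d ih =>
          intro i h1 h2
          have hi1n : i + 1 ≤ n := by omega
          have hin : i ≤ n := by omega
          obtain ⟨hu', hγ'⟩ := ih (i + 1) (by omega) (by omega)
          have hWsp : 0 < W l m (gamN n αs (i + 1)) := hWs (i + 1) (by omega)
          have hWrp : 0 < W l m (gamN n αr (i + 1)) := hWr (i + 1) (by omega)
          have hWle : W l m (gamN n αs (i + 1)) ≤ W l m (gamN n αr (i + 1)) :=
            W_anti l m hm hml (gamN_nonneg n αr hαr0 (by omega)) hγ'
              (gamN_lt_one n αs hαs0 hαssum (by omega))
          have hAs : c < f (i + 1) (Ls i) := (hSpos (i + 1) (by omega) hi1n).1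
          have hAr : c < f (i + 1) (Lr i) := (hRpos (i + 1) (by omega) hi1n).1
          have hu'' : (f (i + 1) (Lr i) - c) * W l m (gamN n αr (i + 1)) <
              (f (i + 1) (Ls i) - c) * W l m (gamN n αs (i + 1)) := hu'
          have hL : Lr i < Ls i := by
            have hfL : f (i + 1) (Lr i) < f (i + 1) (Ls i) := by nlinarith
            exact (hfm (i + 1) (Finset.mem_Icc.2 ⟨by omega, hi1n⟩)).lt_iff_lt.mp hfL
          have hBr : c < f i (Lr i) := (hRpos i h1 hin).2
          have hBs : c < f i (Ls i) := (hSpos i h1 hin).2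
          have hratio := hassum i (Finset.mem_Icc.2 ⟨h1, hin⟩) (i + 1)
            (Finset.mem_Icc.2 ⟨by omega, hi1n⟩) (by omega) (Ls i) (Lr i) hL hBr
          have hAs0 : f (i + 1) (Ls i) - c ≠ 0 := by linarith
          have hAr0 : f (i + 1) (Lr i) - c ≠ 0 := by linarith
          have key : (f i (Lr i) - c) * W l m (gamN n αr (i + 1)) <
              (f i (Ls i) - c) * W l m (gamN n αs (i + 1)) := by
            calc (f i (Lr i) - c) * W l m (gamN n αr (i + 1))
                = ((f (i + 1) (Lr i) - c) * W l m (gamN n αr (i + 1))) *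
                    ((f i (Lr i) - c) / (f (i + 1) (Lr i) - c)) := by
                  field_simp
              _ < ((f (i + 1) (Ls i) - c) * W l m (gamN n αs (i + 1))) *
                    ((f i (Ls i) - c) / (f (i + 1) (Ls i) - c)) := by
                  apply mul_lt_mul'' hu'' hratio
                  · exact le_of_lt (mul_pos (by linarith) hWrp)
                  · exact div_nonneg (by linarith) (by linarith)
              _ = (f i (Ls i) - c) * W l m (gamN n αs (i + 1)) := by
                  field_simp
          have hrs := hLsrec i (Finset.mem_Icc.2 ⟨h1, hin⟩)
          have hrr := hLrrec i (Finset.mem_Icc.2 ⟨h1, hin⟩)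
          have goal1 : payoff l m n c f αr Lr i < payoff l m n c f αs Ls i := by
            simp only [payoff]
            rw [← hrr, ← hrs]
            exact key
          refine ⟨goal1, ?_⟩
          have hα := hcon i (Finset.mem_Icc.2 ⟨h1, hin⟩) goal1
          have hgs := gamN_step n αs (show i ≤ n from hin)
          have hgr := gamN_step n αr (show i ≤ n from hin)
          linarith
    obtain ⟨hu1, hγ1⟩ := down (j - 1) 1 le_rfl (by omega)
    have hW1 : W l m (gamN n αs 1) ≤ W l m (gamN n αr 1) :=
      W_anti l m hm hml (gamN_nonneg n αr hαr0 le_rfl) hγ1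
        (gamN_lt_one n αs hαs0 hαssum le_rfl)
    have hv1 : Ls (1 - 1) = v := by rw [show (1:ℕ) - 1 = 0 from rfl, hLs0]
    have hv2 : Lr (1 - 1) = v := by rw [show (1:ℕ) - 1 = 0 from rfl, hLr0]
    have hu1' : (f 1 v - c) * W l m (gamN n αr 1) < (f 1 v - c) * W l m (gamN n αs 1) := by
      have := hu1
      simp only [payoff, hv1, hv2] at this
      exact this
    nlinarith
  · -- Case B : γ_s j < γ_r j, go upward to index n
    have up : ∀ i, j ≤ i → i ≤ n →
        payoff l m n c f αr Lr i < payoff l m n c f αs Ls i ∧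
          gamN n αs i < gamN n αr i := by
      intro i hji
      induction i, hji using Nat.le_induction with
      | base => exact fun _ => ⟨hu, hcase⟩
      | succ i hji ih =>
          intro hi1n
          have hin : i ≤ n := by omega
          have h1 : 1 ≤ i := by omega
          obtain ⟨hu', hγ'⟩ := ih hin
          have hα := hcon i (Finset.mem_Icc.2 ⟨h1, hin⟩) hu'
          have hgs := gamN_step n αs (show i ≤ n from hin)
          have hgr := gamN_step n αr (show i ≤ n from hin)
          have hγ1 : gamN n αs (i + 1) < gamN n αr (i + 1) := by linarith
          refine ⟨?_, hγ1⟩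
          have hWsp : 0 < W l m (gamN n αs (i + 1)) := hWs (i + 1) (by omega)
          have hWrp : 0 < W l m (gamN n αr (i + 1)) := hWr (i + 1) (by omega)
          have hWle : W l m (gamN n αr (i + 1)) ≤ W l m (gamN n αs (i + 1)) :=
            W_anti l m hm hml (gamN_nonneg n αs hαs0 (by omega)) (le_of_lt hγ1)
              (gamN_lt_one n αr hαr0 hαrsum (by omega))
          have hAs : c < f (i + 1) (Ls i) := (hSpos (i + 1) (by omega) hi1n).1
          have hAr : c < f (i + 1) (Lr i) := (hRpos (i + 1) (by omega) hi1n).1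
          have hBr : c < f i (Lr i) := (hRpos i h1 hin).2
          have hBs : c < f i (Ls i) := (hSpos i h1 hin).2
          have hrs := hLsrec i (Finset.mem_Icc.2 ⟨h1, hin⟩)
          have hrr := hLrrec i (Finset.mem_Icc.2 ⟨h1, hin⟩)
          -- recursion identities : B_a * W'_a = payoff a i
          have hus : (f i (Ls i) - c) * W l m (gamN n αs (i + 1)) =
              payoff l m n c f αs Ls i := hrs
          have hur : (f i (Lr i) - c) * W l m (gamN n αr (i + 1)) =
              payoff l m n c f αr Lr i := hrr
          show (f (i + 1) (Lr (i + 1 - 1)) - c) * W l m (gamN n αr (i + 1)) <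
              (f (i + 1) (Ls (i + 1 - 1)) - c) * W l m (gamN n αs (i + 1))
          show (f (i + 1) (Lr i) - c) * W l m (gamN n αr (i + 1)) <
              (f (i + 1) (Ls i) - c) * W l m (gamN n αs (i + 1))
          rcases le_or_gt (Ls i) (Lr i) with hL | hL
          · have hratio : (f i (Ls i) - c) / (f (i + 1) (Ls i) - c) ≤
                (f i (Lr i) - c) / (f (i + 1) (Lr i) - c) := by
              rcases lt_or_eq_of_le hL with h | h
              · exact le_of_lt (hassum i (Finset.mem_Icc.2 ⟨h1, hin⟩) (i + 1)
                  (Finset.mem_Icc.2 ⟨by omega, hi1n⟩) (by omega) (Lr i) (Ls i) h hBs)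
              · rw [h]
            have hinv : (f (i + 1) (Lr i) - c) / (f i (Lr i) - c) ≤
                (f (i + 1) (Ls i) - c) / (f i (Ls i) - c) := by
              rw [div_le_div_iff₀ (by linarith) (by linarith)] at hratio ⊢
              nlinarith
            have hAs0 : f i (Ls i) - c ≠ 0 := by linarith
            have hAr0 : f i (Lr i) - c ≠ 0 := by linarith
            calc (f (i + 1) (Lr i) - c) * W l m (gamN n αr (i + 1))
                = ((f i (Lr i) - c) * W l m (gamN n αr (i + 1))) *
                    ((f (i + 1) (Lr i) - c) / (f i (Lr i) - c)) := by
                  field_simp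
              _ < ((f i (Ls i) - c) * W l m (gamN n αs (i + 1))) *
                    ((f (i + 1) (Ls i) - c) / (f i (Ls i) - c)) := by
                  have hlt : (f i (Lr i) - c) * W l m (gamN n αr (i + 1)) <
                      (f i (Ls i) - c) * W l m (gamN n αs (i + 1)) := by
                    rw [hus, hur]; exact hu'
                  exact mul_lt_mul hlt hinv (div_pos (by linarith) (by linarith))
                    (le_of_lt (mul_pos (by linarith) hWsp))
              _ = (f (i + 1) (Ls i) - c) * W l m (gamN n αs (i + 1)) := by
                  field_simp
          · have hfL : f (i + 1) (Lr i) < f (i + 1) (Ls i) :=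
              (hfm (i + 1) (Finset.mem_Icc.2 ⟨by omega, hi1n⟩)) hL
            have h1 : (f (i + 1) (Lr i) - c) * W l m (gamN n αr (i + 1)) ≤
                (f (i + 1) (Lr i) - c) * W l m (gamN n αs (i + 1)) :=
              mul_le_mul_of_nonneg_left hWle (by linarith)
            have h2 : (f (i + 1) (Lr i) - c) * W l m (gamN n αs (i + 1)) <
                (f (i + 1) (Ls i) - c) * W l m (gamN n αs (i + 1)) :=
              mul_lt_mul_of_pos_right (by linarith) hWsp
            linarith
    obtain ⟨huN, hγN⟩ := up n hjn le_rfl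
    have hα := hcon n (Finset.mem_Icc.2 ⟨hn, le_rfl⟩) huN
    have hgs := gamN_step n αs (le_refl n)
    have hgr := gamN_step n αr (le_refl n)
    rw [gamN_top] at hgs hgr
    linarith
end

section
/- Let M ≥ 2, let P_M be the path graph on {1,…,M}, let I₁ = {1,3,5,…} be the set of odd vertices and I₂ = {2,4,6,…} the set of even vertices. Then I₁ and I₂ are disjoint maximal independent sets of P_M whose union is {1,…,M}, with |I₁| = ⌈M/2⌉ and |I₂| = ⌊M/2⌋, and every independent set I of P_M satisfies |I ∩ I₁|/|I₁| + |I ∩ I₂|/|I₂| ≤ 1; that is, P_M is a mean valid graph with d = 2. -/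
/-- `I` is an independent set of the path graph on `{1, …, M}` (vertices `i` and `i+1`
adjacent for `1 ≤ i ≤ M-1`). -/
def PathIndep (M : ℕ) (I : Finset ℕ) : Prop :=
  I ⊆ Finset.Icc 1 M ∧ ∀ a ∈ I, a + 1 ∉ I

/-- `I` is a maximal independent set of the path graph on `{1, …, M}`. -/
def PathMaxIndep (M : ℕ) (I : Finset ℕ) : Prop :=
  PathIndep M I ∧ ∀ v ∈ Finset.Icc 1 M, v ∉ I → ¬ PathIndep M (insert v I)

lemma card_odd_Icc (M : ℕ) : ((Finset.Icc 1 M).filter (fun i => Odd i)).card = (M+1)/2 := by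
  induction M with
  | zero => simp
  | succ n ih =>
    rw [← Finset.insert_Icc_right_eq_Icc_add_one (by omega), Finset.filter_insert]
    by_cases h : Odd (n+1)
    · rw [if_pos h, Finset.card_insert_of_notMem (by simp), ih]
      rcases h with ⟨k, hk⟩; omega
    · rw [if_neg h, ih]
      rw [Nat.not_odd_iff_even] at h; rcases h with ⟨k, hk⟩; omega

lemma card_even_Icc (M : ℕ) : ((Finset.Icc 1 M).filter (fun i => Even i)).card = M/2 := by
  induction M with
  | zero => simp
  | succ n ih =>
    rw [← Finset.insert_Icc_right_eq_Icc_add_one (by omega), Finset.filter_insert]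
    by_cases h : Even (n+1)
    · rw [if_pos h, Finset.card_insert_of_notMem (by simp), ih]
      rcases h with ⟨k, hk⟩; omega
    · rw [if_neg h, ih]
      rw [Nat.not_even_iff_odd] at h; rcases h with ⟨k, hk⟩; omega

lemma pathIndep_card_le (M : ℕ) (I : Finset ℕ) (h : PathIndep M I) : I.card ≤ (M+1)/2 := by
  obtain ⟨hsub, hind⟩ := h
  have := Finset.card_le_card_of_injOn (fun i => (i+1)/2)
    (fun i hi => by
      have := hsub hi; simp only [Finset.mem_coe, Finset.mem_Icc] at this ⊢; omega)
    (fun i hi j hj hij => by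
      by_contra hne
      have hcons : i + 1 = j ∨ j + 1 = i := by
        simp only at hij; omega
      rcases hcons with h' | h'
      · exact hind i hi (h' ▸ hj)
      · exact hind j hj (h' ▸ hi)) (s := I) (t := Finset.Icc 1 ((M+1)/2))
  simpa using this

lemma pathIndep_card_le_of_even (M : ℕ) (I : Finset ℕ) (h : PathIndep M I)
    (hModd : Odd M) (e : ℕ) (he : e ∈ I) (heE : Even e) : I.card ≤ M/2 := by
  obtain ⟨hsub, hind⟩ := h
  have heM : 1 ≤ e ∧ e ≤ M := by have := hsub he; simpa using this
  obtain ⟨k, hk⟩ := heE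
  obtain ⟨m, hm⟩ := hModd
  have key : ∀ i ∈ I, i ≠ e + 1 := by
    intro i hi hie
    exact hind e he (hie ▸ hi)
  have := Finset.card_le_card_of_injOn (fun i => if i ≤ e then (i+1)/2 else i/2)
    (fun i hi => by
      have hi' := hsub hi; simp only [Finset.mem_coe, Finset.mem_Icc] at hi' ⊢
      by_cases h' : i ≤ e <;> simp only [h', if_pos, if_neg, if_true, if_false] <;> omega)
    (fun i hi j hj hij => by
      by_contra hne
      have hie := key i hi
      have hje := key j hj
      simp only at hij
      have hcons : i + 1 = j ∨ j + 1 = i := by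
        by_cases h1 : i ≤ e <;> by_cases h2 : j ≤ e <;>
          simp only [h1, h2, if_true, if_false, if_pos, if_neg] at hij <;> omega
      rcases hcons with h' | h'
      · exact hind i hi (h' ▸ hj)
      · exact hind j hj (h' ▸ hi)) (s := I) (t := Finset.Icc 1 (M/2))
  simpa using this

theorem stmt18 (M : ℕ) (hM : 2 ≤ M)
    (I₁ I₂ : Finset ℕ)
    (hI₁ : I₁ = (Finset.Icc 1 M).filter (fun i => Odd i))
    (hI₂ : I₂ = (Finset.Icc 1 M).filter (fun i => Even i)) :
    Disjoint I₁ I₂ ∧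
    I₁ ∪ I₂ = Finset.Icc 1 M ∧
    PathMaxIndep M I₁ ∧
    PathMaxIndep M I₂ ∧
    I₁.card = (M + 1) / 2 ∧
    I₂.card = M / 2 ∧
    (∀ I : Finset ℕ, PathIndep M I →
      ((I ∩ I₁).card : ℝ) / (I₁.card : ℝ) + ((I ∩ I₂).card : ℝ) / (I₂.card : ℝ) ≤ 1) := by
  subst hI₁ hI₂
  have hdisj : Disjoint ((Finset.Icc 1 M).filter (fun i => Odd i))
      ((Finset.Icc 1 M).filter (fun i => Even i)) := by
    rw [Finset.disjoint_left]
    intro a ha hb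
    simp only [Finset.mem_filter] at ha hb
    exact (Nat.not_even_iff_odd.2 ha.2) hb.2
  have hunion : (Finset.Icc 1 M).filter (fun i => Odd i) ∪
      (Finset.Icc 1 M).filter (fun i => Even i) = Finset.Icc 1 M := by
    ext a
    simp only [Finset.mem_union, Finset.mem_filter]
    constructor
    · rintro (⟨h, _⟩ | ⟨h, _⟩) <;> exact h
    · intro h
      rcases Nat.even_or_odd a with h' | h'
      · exact Or.inr ⟨h, h'⟩
      · exact Or.inl ⟨h, h'⟩
  have hmax1 : PathMaxIndep M ((Finset.Icc 1 M).filter (fun i => Odd i)) := by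
    constructor
    · constructor
      · exact Finset.filter_subset _ _
      · intro a ha hb
        simp only [Finset.mem_filter] at ha hb
        rcases ha.2 with ⟨k, hk⟩; rcases hb.2 with ⟨l, hl⟩; omega
    · intro v hv hvnot hins
      simp only [Finset.mem_Icc] at hv
      simp only [Finset.mem_filter, Finset.mem_Icc] at hvnot
      have hveven : Even v := by
        rcases Nat.even_or_odd v with h' | h'
        · exact h'
        · exact absurd ⟨⟨hv.1, hv.2⟩, h'⟩ hvnot
      obtain ⟨k, hk⟩ := hveven
      have hv1 : v - 1 ∈ insert v ((Finset.Icc 1 M).filter (fun i => Odd i)) := by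
        apply Finset.mem_insert_of_mem
        simp only [Finset.mem_filter, Finset.mem_Icc]
        exact ⟨⟨by omega, by omega⟩, ⟨k - 1, by omega⟩⟩
      have := hins.2 (v - 1) hv1
      apply this
      have : v - 1 + 1 = v := by omega
      rw [this]
      exact Finset.mem_insert_self _ _
  have hmax2 : PathMaxIndep M ((Finset.Icc 1 M).filter (fun i => Even i)) := by
    constructor
    · constructor
      · exact Finset.filter_subset _ _
      · intro a ha hb
        simp only [Finset.mem_filter] at ha hb
        rcases ha.2 with ⟨k, hk⟩; rcases hb.2 with ⟨l, hl⟩; omega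
    · intro v hv hvnot hins
      simp only [Finset.mem_Icc] at hv
      simp only [Finset.mem_filter, Finset.mem_Icc] at hvnot
      have hvodd : Odd v := by
        rcases Nat.even_or_odd v with h' | h'
        · exact absurd ⟨⟨hv.1, hv.2⟩, h'⟩ hvnot
        · exact h'
      obtain ⟨k, hk⟩ := hvodd
      by_cases hvM : v < M
      · have hv1 : v + 1 ∈ insert v ((Finset.Icc 1 M).filter (fun i => Even i)) := by
          apply Finset.mem_insert_of_mem
          simp only [Finset.mem_filter, Finset.mem_Icc]
          exact ⟨⟨by omega, by omega⟩, ⟨k + 1, by omega⟩⟩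
        exact hins.2 v (Finset.mem_insert_self _ _) hv1
      · have hvM' : v = M := by omega
        have hv1 : v - 1 ∈ insert v ((Finset.Icc 1 M).filter (fun i => Even i)) := by
          apply Finset.mem_insert_of_mem
          simp only [Finset.mem_filter, Finset.mem_Icc]
          exact ⟨⟨by omega, by omega⟩, ⟨k, by omega⟩⟩
        have := hins.2 (v - 1) hv1
        apply this
        have : v - 1 + 1 = v := by omega
        rw [this]
        exact Finset.mem_insert_self _ _
  refine ⟨hdisj, hunion, hmax1, hmax2, card_odd_Icc M, card_even_Icc M, ?_⟩
  intro I hI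
  set p := (M + 1) / 2 with hp
  set q := M / 2 with hq
  have hp1 : 1 ≤ p := by omega
  have hq1 : 1 ≤ q := by omega
  set a := (I ∩ (Finset.Icc 1 M).filter (fun i => Odd i)).card with ha
  set b := (I ∩ (Finset.Icc 1 M).filter (fun i => Even i)).card with hb
  have hab : a + b = I.card := by
    rw [ha, hb, ← Finset.card_union_of_disjoint
      (Finset.disjoint_of_subset_left (Finset.inter_subset_right)
        (Finset.disjoint_of_subset_right (Finset.inter_subset_right) hdisj)),
      ← Finset.inter_union_distrib_left, hunion,
      Finset.inter_eq_left.2 hI.1]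
  have hcard : I.card ≤ p := pathIndep_card_le M I hI
  -- key nat inequality
  have hkey : a * q + b * p ≤ p * q := by
    rcases Nat.even_or_odd M with hMe | hMo
    · have hpq : p = q := by obtain ⟨k, hk⟩ := hMe; omega
      calc a * q + b * p = (a + b) * q := by rw [hpq]; ring
        _ ≤ p * q := Nat.mul_le_mul_right q (by omega)
    · have hpq : p = q + 1 := by obtain ⟨k, hk⟩ := hMo; omega
      by_cases hb0 : b = 0
      · have haq : a ≤ p := by omega
        calc a * q + b * p = a * q := by rw [hb0]; ring
          _ ≤ p * q := Nat.mul_le_mul_right q haq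
      · obtain ⟨e, he⟩ := Finset.card_pos.1 (by omega : 0 < b)
        simp only [Finset.mem_inter, Finset.mem_filter] at he
        have hIq : I.card ≤ q := pathIndep_card_le_of_even M I hI hMo e he.1 he.2.2
        have hbq : b ≤ q := by omega
        calc a * q + b * p = (a + b) * q + b := by rw [hpq]; ring
          _ ≤ q * q + q := by
              have := Nat.mul_le_mul_right q (show a + b ≤ q by omega)
              omega
          _ = q * (q + 1) := by ring
          _ = p * q := by rw [hpq]; ring
  rw [card_odd_Icc, card_even_Icc]
  have hpR : (0:ℝ) < p := by positivity
  have hqR : (0:ℝ) < q := by exact_mod_cast hq1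
  have hpR' : (0:ℝ) < p := by exact_mod_cast hp1
  rw [div_add_div _ _ (ne_of_gt hpR') (ne_of_gt hqR), div_le_one (by positivity)]
  have : (a : ℝ) * q + (b : ℝ) * p ≤ (p : ℝ) * q := by exact_mod_cast hkey
  linarith
end

section
/- Let G be a finite simple graph in which every vertex has degree at most Δ, and let q ∈ [0,1] satisfy q·Δ < 1. Consider independent Bernoulli(q) site percolation on G: under the product measure on configurations ω : V → {open, closed} each vertex is open with probability q independently. Fix a vertex a and let C(ω) be the set of vertices joined to a by a path of G all of whose vertices (including a and the endpoint) are open, when a is open, and C(ω) = ∅ when a is closed. Then the expected size of C satisfies E[|C|] ≤ 1/(1 − qΔ). -/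
/-- The subgraph of `G` induced by the open vertices of the configuration `ω`:
two vertices are adjacent iff they are adjacent in `G` and both are open. -/
def openGraph {V : Type*} (G : SimpleGraph V) (ω : V → Bool) : SimpleGraph V where
  Adj u v := G.Adj u v ∧ ω u = true ∧ ω v = true
  symm := ⟨fun u v ⟨h, hu, hv⟩ => ⟨h.symm, hv, hu⟩⟩
  loopless := ⟨fun u ⟨h, _, _⟩ => G.irrefl h⟩

/-- The open component of `a` in the configuration `ω`: the set of vertices reachable
from `a` through open vertices, when `a` is open; empty when `a` is closed. -/
def openComponent {V : Type*} (G : SimpleGraph V) (ω : V → Bool) (a : V) : Set V :=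
  {x : V | ω a = true ∧ (openGraph G ω).Reachable a x}

lemma openGraph_le {V : Type*} (G : SimpleGraph V) (ω : V → Bool) :
    openGraph G ω ≤ G := fun _ _ h => h.1

lemma openGraph_walk_support_open {V : Type*} {G : SimpleGraph V} {ω : V → Bool}
    {a x : V} (ha : ω a = true) (p : (openGraph G ω).Walk a x) :
    ∀ v ∈ p.support, ω v = true := by
  induction p with
  | nil => simpa using ha
  | @cons u w x h p ih =>
    intro v hv
    rw [SimpleGraph.Walk.support_cons, List.mem_cons] at hv
    rcases hv with rfl | hv
    · exact ha
    · exact ih h.2.2 v hv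

/-- Product measure computation: the probability that all vertices of `S` are open. -/
lemma sum_weight_indicator {V : Type*} [Fintype V] [DecidableEq V]
    (q : ℝ) (S : Finset V) :
    ∑ ω : V → Bool, (∏ v : V, (if ω v = true then q else 1 - q)) *
      (∏ v ∈ S, (if ω v = true then (1:ℝ) else 0)) = q ^ S.card := by
  have hrw : ∀ ω : V → Bool,
      (∏ v : V, (if ω v = true then q else 1 - q)) *
        (∏ v ∈ S, (if ω v = true then (1:ℝ) else 0))
      = ∏ v : V, ((if ω v = true then q else 1 - q) *
          (if v ∈ S then (if ω v = true then (1:ℝ) else 0) else 1)) := by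
    intro ω
    rw [Finset.prod_mul_distrib]
    congr 1
    rw [Finset.prod_ite_mem, Finset.univ_inter]
  calc ∑ ω : V → Bool, (∏ v : V, (if ω v = true then q else 1 - q)) *
        (∏ v ∈ S, (if ω v = true then (1:ℝ) else 0))
      = ∑ ω : V → Bool, ∏ v : V, ((if ω v = true then q else 1 - q) *
          (if v ∈ S then (if ω v = true then (1:ℝ) else 0) else 1)) := by
        exact Finset.sum_congr rfl fun ω _ => hrw ω
    _ = ∏ v : V, ∑ b : Bool, ((if b = true then q else 1 - q) *
          (if v ∈ S then (if b = true then (1:ℝ) else 0) else 1)) := by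
        rw [Fintype.prod_sum]
    _ = ∏ v : V, (if v ∈ S then q else 1) := by
        refine Finset.prod_congr rfl fun v _ => ?_
        rw [Fintype.sum_bool]
        by_cases hv : v ∈ S <;> simp [hv] <;> ring
    _ = q ^ S.card := by
        rw [Finset.prod_ite_mem, Finset.univ_inter, Finset.prod_const]

/-- Row sums of powers of the adjacency matrix are bounded by `Δ ^ k`. -/
lemma adjMatrix_pow_row_sum_le {V : Type*} [Fintype V] [DecidableEq V]
    (G : SimpleGraph V) [DecidableRel G.Adj] (Δ : ℕ) (hdeg : ∀ v : V, G.degree v ≤ Δ)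
    (k : ℕ) (a : V) : ∑ x : V, (G.adjMatrix ℕ ^ k) a x ≤ Δ ^ k := by
  induction k generalizing a with
  | zero => simp [Matrix.one_apply]
  | succ k ih =>
    calc ∑ x : V, (G.adjMatrix ℕ ^ (k+1)) a x
        = ∑ x : V, ∑ y ∈ G.neighborFinset a, (G.adjMatrix ℕ ^ k) y x := by
          refine Finset.sum_congr rfl fun x _ => ?_
          rw [pow_succ', SimpleGraph.adjMatrix_mul_apply]
      _ = ∑ y ∈ G.neighborFinset a, ∑ x : V, (G.adjMatrix ℕ ^ k) y x := Finset.sum_comm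
      _ ≤ ∑ _y ∈ G.neighborFinset a, Δ ^ k := Finset.sum_le_sum fun y _ => ih y
      _ = G.degree a * Δ ^ k := by
          rw [Finset.sum_const, smul_eq_mul, SimpleGraph.card_neighborFinset_eq_degree]
      _ ≤ Δ * Δ ^ k := Nat.mul_le_mul_right _ (hdeg a)
      _ = Δ ^ (k+1) := (pow_succ' Δ k).symm

theorem stmt19 {V : Type*} [Fintype V] [DecidableEq V] (G : SimpleGraph V)
    [DecidableRel G.Adj]
    (Δ : ℕ) (hdeg : ∀ v : V, G.degree v ≤ Δ)
    (q : ℝ) (hq0 : 0 ≤ q) (hq1 : q ≤ 1) (hqΔ : q * Δ < 1) (a : V) :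
    ∑ ω : V → Bool,
        (∏ v : V, (if ω v = true then q else 1 - q)) *
          ((openComponent G ω a).ncard : ℝ) ≤ 1 / (1 - q * Δ) := by
  classical
  set n := Fintype.card V with hn
  -- rewrite the cardinality as a sum of indicators
  have hncard : ∀ ω : V → Bool, ((openComponent G ω a).ncard : ℝ)
      = ∑ x : V, (if x ∈ openComponent G ω a then (1:ℝ) else 0) := by
    intro ω
    have h1 : openComponent G ω a
        = ↑(Finset.univ.filter (· ∈ openComponent G ω a)) := by
      ext x; simp
    rw [h1, Set.ncard_coe_finset, Finset.card_filter]
    push_cast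
    refine Finset.sum_congr rfl fun x _ => by simp
  -- per-configuration union bound over paths
  have hub : ∀ (ω : V → Bool) (x : V),
      (if x ∈ openComponent G ω a then (1:ℝ) else 0)
        ≤ ∑ p : G.Path a x, ∏ v ∈ p.1.support.toFinset,
            (if ω v = true then (1:ℝ) else 0) := by
    intro ω x
    have hnonneg : ∀ p : G.Path a x,
        (0:ℝ) ≤ ∏ v ∈ p.1.support.toFinset, (if ω v = true then (1:ℝ) else 0) := by
      intro p
      exact Finset.prod_nonneg fun v _ => by positivity
    by_cases hx : x ∈ openComponent G ω a
    · have ha := hx.1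
      obtain ⟨w⟩ := hx.2
      let p0 := w.toPath
      have hopen : ∀ v ∈ p0.1.support, ω v = true :=
        openGraph_walk_support_open ha p0.1
      refine le_trans ?_ (Finset.single_le_sum (f := fun p : G.Path a x =>
        ∏ v ∈ p.1.support.toFinset, (if ω v = true then (1:ℝ) else 0))
        (fun p _ => hnonneg p)
        (Finset.mem_univ ⟨p0.1.mapLe (openGraph_le G ω), p0.2.mapLe _⟩))
      have hsupp : (p0.1.mapLe (openGraph_le G ω)).support = p0.1.support := by
        have hid : ⇑(SimpleGraph.Hom.ofLE (openGraph_le G ω)) = id := rfl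
        simp [SimpleGraph.Walk.mapLe, SimpleGraph.Walk.support_map, hid]
      rw [if_pos hx]
      have : ∏ v ∈ (p0.1.mapLe (openGraph_le G ω)).support.toFinset,
          (if ω v = true then (1:ℝ) else 0) = 1 := by
        refine Finset.prod_eq_one fun v hv => ?_
        rw [hsupp] at hv
        rw [if_pos (hopen v (List.mem_toFinset.mp hv))]
      exact le_of_eq this.symm
    · rw [if_neg hx]
      exact Finset.sum_nonneg fun p _ => hnonneg p
  have hwnonneg : ∀ ω : V → Bool,
      (0:ℝ) ≤ ∏ v : V, (if ω v = true then q else 1 - q) := by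
    intro ω
    refine Finset.prod_nonneg fun v _ => ?_
    by_cases h : ω v = true <;> simp [h, hq0] <;> linarith
  -- main chain
  have step1 : ∑ ω : V → Bool,
        (∏ v : V, (if ω v = true then q else 1 - q)) *
          ((openComponent G ω a).ncard : ℝ)
      ≤ ∑ x : V, ∑ p : G.Path a x, q ^ (p.1.length + 1) := by
    calc ∑ ω : V → Bool,
          (∏ v : V, (if ω v = true then q else 1 - q)) *
            ((openComponent G ω a).ncard : ℝ)
        ≤ ∑ ω : V → Bool, ∑ x : V, ∑ p : G.Path a x,
            (∏ v : V, (if ω v = true then q else 1 - q)) *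
              ∏ v ∈ p.1.support.toFinset, (if ω v = true then (1:ℝ) else 0) := by
          refine Finset.sum_le_sum fun ω _ => ?_
          rw [hncard ω, Finset.mul_sum]
          refine Finset.sum_le_sum fun x _ => ?_
          rw [← Finset.mul_sum]
          exact mul_le_mul_of_nonneg_left (hub ω x) (hwnonneg ω)
      _ = ∑ x : V, ∑ p : G.Path a x, ∑ ω : V → Bool,
            (∏ v : V, (if ω v = true then q else 1 - q)) *
              ∏ v ∈ p.1.support.toFinset, (if ω v = true then (1:ℝ) else 0) := by
          rw [Finset.sum_comm]
          exact Finset.sum_congr rfl fun x _ => Finset.sum_comm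
      _ = ∑ x : V, ∑ p : G.Path a x, q ^ (p.1.support.toFinset.card) := by
          refine Finset.sum_congr rfl fun x _ => Finset.sum_congr rfl fun p _ => ?_
          exact sum_weight_indicator q _
      _ = ∑ x : V, ∑ p : G.Path a x, q ^ (p.1.length + 1) := by
          refine Finset.sum_congr rfl fun x _ => Finset.sum_congr rfl fun p _ => ?_
          rw [List.toFinset_card_of_nodup p.2.support_nodup,
            SimpleGraph.Walk.length_support]
  -- group paths by length and count
  have step2 : ∀ x : V, ∑ p : G.Path a x, q ^ (p.1.length + 1)
      = ∑ k ∈ Finset.range n,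
          ((Finset.univ.filter (fun p : G.Path a x => p.1.length = k)).card : ℝ)
            * q ^ (k + 1) := by
    intro x
    rw [← Finset.sum_fiberwise_of_maps_to (g := fun p : G.Path a x => p.1.length)
      (fun p _ => Finset.mem_range.mpr p.2.length_lt)]
    refine Finset.sum_congr rfl fun k _ => ?_
    rw [Finset.sum_congr rfl (fun p hp => by
      rw [(Finset.mem_filter.mp hp).2]), Finset.sum_const, nsmul_eq_mul]
  have count : ∀ k : ℕ, ∑ x : V,
      ((Finset.univ.filter (fun p : G.Path a x => p.1.length = k)).card : ℕ) ≤ Δ ^ k := by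
    intro k
    have hx : ∀ x : V,
        (Finset.univ.filter (fun p : G.Path a x => p.1.length = k)).card
          ≤ (G.adjMatrix ℕ ^ k) a x := by
      intro x
      rw [SimpleGraph.adjMatrix_pow_apply_eq_card_walk]
      have : (Finset.univ.filter (fun p : G.Path a x => p.1.length = k)).card
          = Fintype.card {p : G.Path a x // p.1.length = k} := by
        rw [Fintype.card_subtype]
      rw [this]
      exact Fintype.card_le_of_injective
        (fun p => ⟨p.1.1, p.2⟩)
        (fun p p' h => by
          simp only [Subtype.mk.injEq] at h
          exact Subtype.ext (Subtype.ext h))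
    calc ∑ x : V, (Finset.univ.filter (fun p : G.Path a x => p.1.length = k)).card
        ≤ ∑ x : V, (G.adjMatrix ℕ ^ k) a x := Finset.sum_le_sum fun x _ => hx x
      _ ≤ Δ ^ k := adjMatrix_pow_row_sum_le G Δ hdeg k a
  -- geometric series bound
  have hr0 : (0:ℝ) ≤ q * Δ := by positivity
  have hgeom : ∑ k ∈ Finset.range n, (q * Δ) ^ k ≤ (1 - q * Δ)⁻¹ := by
    calc ∑ k ∈ Finset.range n, (q * Δ) ^ k
        ≤ ∑' k : ℕ, (q * Δ) ^ k :=
          Summable.sum_le_tsum _ (fun k _ => by positivity)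
            (summable_geometric_of_lt_one hr0 hqΔ)
      _ = (1 - q * Δ)⁻¹ := tsum_geometric_of_lt_one hr0 hqΔ
  have step3 : ∑ x : V, ∑ p : G.Path a x, q ^ (p.1.length + 1)
      ≤ 1 / (1 - q * Δ) := by
    calc ∑ x : V, ∑ p : G.Path a x, q ^ (p.1.length + 1)
        = ∑ k ∈ Finset.range n, (∑ x : V,
            ((Finset.univ.filter (fun p : G.Path a x => p.1.length = k)).card : ℝ))
              * q ^ (k + 1) := by
          rw [Finset.sum_congr rfl fun x _ => step2 x, Finset.sum_comm]
          exact Finset.sum_congr rfl fun k _ => (Finset.sum_mul _ _ _).symm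
      _ ≤ ∑ k ∈ Finset.range n, (Δ:ℝ) ^ k * q ^ (k + 1) := by
          refine Finset.sum_le_sum fun k _ => ?_
          refine mul_le_mul_of_nonneg_right ?_ (by positivity)
          have := count k
          calc (∑ x : V, ((Finset.univ.filter
                (fun p : G.Path a x => p.1.length = k)).card : ℝ))
              = ((∑ x : V, (Finset.univ.filter
                (fun p : G.Path a x => p.1.length = k)).card : ℕ) : ℝ) := by push_cast; rfl
            _ ≤ ((Δ ^ k : ℕ) : ℝ) := Nat.cast_le.mpr this
            _ = (Δ:ℝ) ^ k := by push_cast; rfl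
      _ = q * ∑ k ∈ Finset.range n, (q * Δ) ^ k := by
          rw [Finset.mul_sum]
          refine Finset.sum_congr rfl fun k _ => ?_
          rw [mul_pow]; ring
      _ ≤ 1 * (1 - q * Δ)⁻¹ := by
          refine mul_le_mul hq1 hgeom ?_ zero_le_one
          exact Finset.sum_nonneg fun k _ => by positivity
      _ = 1 / (1 - q * Δ) := by rw [one_mul, one_div]
  exact le_trans step1 step3
end
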